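/- Let X be a nonempty subset of the real line ℝ (with the standard metric, X carrying the induced metric). Then d_GH(X, ℝ) = d_H(X, ℝ), where both distances are values in [0,∞] and d_H is the Hausdorff distance between X and ℝ as subsets of ℝ. -/

import Mathlib

open scoped ENNReal

noncomputable section

/-- Ultrametric pseudodistance: infimum over chains from `x` to `y` of the
maximal edge length of the chain. -/
noncomputable def ultraDist {X : Type*} [MetricSpace X] (x y : X) : ℝ≥0∞ :=
  ⨅ (n : ℕ) (f : Fin (n + 1) → X) (_ : f 0 = x) (_ : f (Fin.last n) = y),
    ⨆ i : Fin n, edist (f i.castSucc) (f i.succ)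

/-- Ultrametric pseudodiameter. -/
noncomputable def ultraDiam (X : Type*) [MetricSpace X] : ℝ≥0∞ :=
  ⨆ (x : X) (y : X), ultraDist x y

/-- A correspondence between `X` and `Y`: a relation whose projections are surjective. -/
def IsCorrespondence {X Y : Type*} (R : Set (X × Y)) : Prop :=
  (∀ x : X, ∃ y : Y, (x, y) ∈ R) ∧ (∀ y : Y, ∃ x : X, (x, y) ∈ R)

/-- Distortion of a relation. -/
noncomputable def distortion {X Y : Type*} [MetricSpace X] [MetricSpace Y]
    (R : Set (X × Y)) : ℝ≥0∞ :=
  ⨆ (p ∈ R) (q ∈ R), ENNReal.ofReal |dist p.1 q.1 - dist p.2 q.2|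

/-- Gromov–Hausdorff distance: half the infimal distortion of correspondences. -/
noncomputable def ghDist (X Y : Type*) [MetricSpace X] [MetricSpace Y] : ℝ≥0∞ :=
  (⨅ (R : Set (X × Y)) (_ : IsCorrespondence R), distortion R) / 2


/-- In ℝ, if a set and its complement are both nonempty, there are points of each
within `δ` of each other. -/
lemma exists_close_mem_notmem (A : Set ℝ) (ha : A.Nonempty) (hb : Aᶜ.Nonempty)
    {δ : ℝ} (hδ : 0 < δ) : ∃ s ∈ A, ∃ t ∈ Aᶜ, dist s t < δ := by
  have hfr : (frontier A).Nonempty := by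
    rw [Set.nonempty_iff_ne_empty]
    intro h
    rcases isClopen_iff.mp (isClopen_iff_frontier_eq_empty.mpr h) with h' | h'
    · exact absurd h' ha.ne_empty
    · rw [h', Set.compl_univ] at hb; exact absurd rfl hb.ne_empty
  obtain ⟨z, hz⟩ := hfr
  rw [frontier_eq_closure_inter_closure] at hz
  obtain ⟨s, hsA, hs⟩ := Metric.mem_closure_iff.mp hz.1 (δ/2) (by linarith)
  obtain ⟨t, htA, ht⟩ := Metric.mem_closure_iff.mp hz.2 (δ/2) (by linarith)
  refine ⟨s, hsA, t, htA, ?_⟩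
  calc dist s t ≤ dist s z + dist z t := dist_triangle _ _ _
    _ < δ/2 + δ/2 := by rw [dist_comm s z]; exact add_lt_add hs ht
    _ = δ := by ring

/-- A rough isometry of ℝ into ℝ has image an approximate net. -/
lemma rough_net (f : ℝ → ℝ) (c : ℝ) (hc : 0 ≤ c)
    (hf : ∀ s t : ℝ, abs (|f s - f t| - |s - t|) ≤ c)
    (p r : ℝ) (hr : c / 2 < r) : ∃ t : ℝ, |f t - p| < r := by
  by_contra hcon
  push_neg at hcon
  have hr0 : 0 < r := lt_of_le_of_lt (by positivity) hr
  set w := f 0 with hw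
  set T : ℝ := 2*c + r + |w - p| + 1 with hT
  have habs : 0 ≤ |w - p| := abs_nonneg _
  have h1 := hf T 0
  have h2 := hf (-T) 0
  have h3 := hf T (-T)
  rw [show |T - (0:ℝ)| = T by rw [sub_zero]; exact abs_of_pos (by positivity)] at h1
  rw [show |(-T) - (0:ℝ)| = T by rw [sub_zero, abs_neg]; exact abs_of_pos (by positivity)] at h2
  rw [show |T - (-T)| = 2*T by rw [sub_neg_eq_add, ← two_mul]; exact abs_of_pos (by positivity)] at h3
  rw [abs_le] at h1 h2 h3
  -- lower/upper bounds
  have hu1 : T - c ≤ |f T - w| := by linarith [h1.1]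
  have hu2 : T - c ≤ |f (-T) - w| := by linarith [h2.1]
  have hu3 : 2*T - c ≤ |f T - f (-T)| := by linarith [h3.1]
  have hv1 : |f T - w| ≤ T + c := by linarith [h1.2]
  have hv2 : |f (-T) - w| ≤ T + c := by linarith [h2.2]
  -- opposite sides
  have hopp : (f T ≤ p - r ∧ p + r ≤ f (-T)) ∨ (f (-T) ≤ p - r ∧ p + r ≤ f T) := by
    have hwp1 : -(|w - p|) ≤ w - p := neg_abs_le _
    have hwp2 : w - p ≤ |w - p| := le_abs_self _
    rcases le_or_gt (f T) w with hTw | hTw <;> rcases le_or_gt (f (-T)) w with hTw' | hTw'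
    · -- both ≤ w : contradiction
      exfalso
      rw [abs_of_nonpos (by linarith)] at hv1
      rw [abs_of_nonpos (by linarith)] at hv2
      have : |f T - f (-T)| ≤ T + c := abs_sub_le_iff.mpr ⟨by linarith, by linarith⟩
      linarith
    · left
      rw [abs_of_nonpos (by linarith)] at hu1
      rw [abs_of_pos (by linarith)] at hu2
      constructor <;> [skip; skip] <;> · simp only [hT] at hu1 hu2 ⊢; linarith
    · right
      rw [abs_of_pos (by linarith)] at hu1
      rw [abs_of_nonpos (by linarith)] at hu2
      constructor <;> · simp only [hT] at hu1 hu2 ⊢; linarith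
    · exfalso
      rw [abs_of_pos (by linarith)] at hv1
      rw [abs_of_pos (by linarith)] at hv2
      have : |f T - f (-T)| ≤ T + c := abs_sub_le_iff.mpr ⟨by linarith, by linarith⟩
      linarith
  obtain ⟨a, b, hfa, hfb⟩ : ∃ a b : ℝ, f a ≤ p - r ∧ p + r ≤ f b := by
    rcases hopp with ⟨h', h''⟩ | ⟨h', h''⟩
    · exact ⟨T, -T, h', h''⟩
    · exact ⟨-T, T, h', h''⟩
  -- bisection via frontier
  set A : Set ℝ := {t | f t ≤ p - r} with hA
  have haA : a ∈ A := hfa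
  have hbA : b ∈ Aᶜ := by
    simp only [hA, Set.mem_compl_iff, Set.mem_setOf_eq, not_le]
    linarith
  obtain ⟨s, hsA, t, htA, hst⟩ :=
    exists_close_mem_notmem A ⟨a, haA⟩ ⟨b, hbA⟩ (δ := 2*r - c) (by linarith)
  have hfs : f s ≤ p - r := hsA
  have hft : p + r ≤ f t := by
    have h' : ¬ (f t ≤ p - r) := htA
    rcases le_abs.mp (hcon t) with h'' | h''
    · linarith
    · exact absurd (by linarith : f t ≤ p - r) h'
  -- contradiction
  have h4 := hf s t
  rw [abs_le] at h4
  have h5 : 2*r ≤ |f s - f t| := by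
    rw [abs_sub_comm, abs_of_nonneg (by linarith)]; linarith
  have h6 : |s - t| < 2*r - c := by rw [← Real.dist_eq]; exact hst
  linarith [h4.2]

/-- for any nonempty subset `X ⊆ ℝ`, the Gromov–Hausdorff
distance between `X` (with the induced metric) and `ℝ` equals the Hausdorff
distance between `X` and `ℝ` (both valued in `[0,∞]`). -/
theorem ghDist_eq_hausdorff_real (X : Set ℝ) (hX : X.Nonempty) :
    ghDist X ℝ = EMetric.hausdorffEdist X (Set.univ : Set ℝ) := by
  set D := EMetric.hausdorffEdist X (Set.univ : Set ℝ) with hD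
  apply le_antisymm
  · -- ghDist ≤ D
    rcases eq_top_or_lt_top D with htop | hlt
    · rw [htop]; exact le_top
    apply ENNReal.le_of_forall_pos_le_add
    intro ε hε _
    set d := D.toReal with hd
    have hd0 : 0 ≤ d := ENNReal.toReal_nonneg
    have hε' : (0:ℝ) < ε := hε
    set ρ : ℝ := d + ε with hρdef
    have hρ : 0 < ρ := by positivity
    set R : Set (↥X × ℝ) := {p | dist (p.1 : ℝ) p.2 ≤ ρ} with hR
    have hcorr : IsCorrespondence R := by
      constructor
      · intro x
        exact ⟨(x : ℝ), by simp [hR, hρ.le]⟩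
      · intro y
        have h1 : EMetric.infEdist y X ≤ D := by
          rw [hD]; unfold EMetric.hausdorffEdist; rw [EMetric.hausdorffEdist_comm]
          exact EMetric.infEdist_le_hausdorffEdist_of_mem (Set.mem_univ y)
        have h2 : EMetric.infEdist y X < ENNReal.ofReal ρ := by
          refine lt_of_le_of_lt h1 ?_
          rw [show D = ENNReal.ofReal d from (ENNReal.ofReal_toReal hlt.ne).symm]
          exact ENNReal.ofReal_lt_ofReal_iff hρ |>.mpr (by linarith)
        obtain ⟨x, hxX, hxy⟩ := EMetric.infEdist_lt_iff.mp h2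
        refine ⟨⟨x, hxX⟩, ?_⟩
        simp only [hR, Set.mem_setOf_eq]
        rw [dist_comm]
        exact (edist_lt_ofReal.mp hxy).le
    have hdis : distortion R ≤ ENNReal.ofReal (2 * ρ) := by
      apply iSup₂_le; intro q hq; apply iSup₂_le; intro q' hq'
      apply ENNReal.ofReal_le_ofReal
      have hq1 : dist (q.1 : ℝ) q.2 ≤ ρ := hq
      have hq2 : dist (q'.1 : ℝ) q'.2 ≤ ρ := hq'
      rw [Subtype.dist_eq, ← Real.dist_eq]
      calc dist (dist (q.1:ℝ) (q'.1:ℝ)) (dist q.2 q'.2)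
          ≤ dist (q.1:ℝ) q.2 + dist (q'.1:ℝ) q'.2 := dist_dist_dist_le _ _ _ _
        _ ≤ 2 * ρ := by linarith
    have hgh : ghDist ↥X ℝ ≤ ENNReal.ofReal ρ := by
      have h1 : ghDist ↥X ℝ ≤ distortion R / 2 := by
        apply ENNReal.div_le_div_right
        exact iInf₂_le R hcorr
      refine h1.trans ?_
      rw [show ENNReal.ofReal (2*ρ) = 2 * ENNReal.ofReal ρ by
        rw [ENNReal.ofReal_mul (by norm_num)]; norm_num] at hdis
      calc distortion R / 2 ≤ 2 * ENNReal.ofReal ρ / 2 := ENNReal.div_le_div_right hdis 2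
        _ = ENNReal.ofReal ρ := by
            rw [mul_comm, mul_div_assoc, ENNReal.div_self (by norm_num) (by norm_num), mul_one]
    refine hgh.trans ?_
    rw [hρdef, ENNReal.ofReal_add hd0 hε'.le, ENNReal.ofReal_toReal hlt.ne,
      ENNReal.ofReal_coe_nnreal]
  · -- D ≤ ghDist
    rw [ghDist, ENNReal.le_div_iff_mul_le (Or.inl two_ne_zero) (Or.inl ENNReal.ofNat_ne_top)]
    refine le_iInf₂ ?_
    intro R hcorr
    rcases eq_top_or_lt_top (distortion R) with htop | hlt
    · rw [htop]; exact le_top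
    set c : ℝ := (distortion R).toReal with hcdef
    have hc0 : 0 ≤ c := ENNReal.toReal_nonneg
    set f : ℝ → ℝ := fun t => ((hcorr.2 t).choose : ℝ) with hfdef
    have hfX : ∀ t, f t ∈ X := fun t => (hcorr.2 t).choose.2
    have hfR : ∀ t, ((hcorr.2 t).choose, t) ∈ R := fun t => (hcorr.2 t).choose_spec
    have hf : ∀ s t : ℝ, abs (|f s - f t| - |s - t|) ≤ c := by
      intro s t
      have hle : ENNReal.ofReal |dist ((hcorr.2 s).choose) ((hcorr.2 t).choose) - dist s t|
          ≤ distortion R := by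
        refine le_trans ?_ (le_iSup₂ (f := fun p (_ : p ∈ R) =>
          ⨆ (q : ↥X × ℝ) (_ : q ∈ R), ENNReal.ofReal |dist p.1 q.1 - dist p.2 q.2|)
          ((hcorr.2 s).choose, s) (hfR s))
        exact le_iSup₂ (f := fun q (_ : q ∈ R) =>
          ENNReal.ofReal |dist ((hcorr.2 s).choose, s).1 q.1 - dist ((hcorr.2 s).choose, s).2 q.2|)
          ((hcorr.2 t).choose, t) (hfR t)
      rw [Subtype.dist_eq, Real.dist_eq, Real.dist_eq] at hle
      exact (ENNReal.ofReal_le_iff_le_toReal hlt.ne).mp hle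
    have hnet : ∀ y : ℝ, EMetric.infEdist y X ≤ distortion R / 2 := by
      intro y
      apply ENNReal.le_of_forall_pos_le_add
      intro ε hε _
      have hε' : (0:ℝ) < ε := hε
      obtain ⟨t, ht⟩ := rough_net f c hc0 hf y (c/2 + ε) (by linarith)
      have h1 : EMetric.infEdist y X ≤ edist y (f t) :=
        EMetric.infEdist_le_edist_of_mem (hfX t)
      refine h1.trans ?_
      rw [edist_dist, Real.dist_eq]
      calc ENNReal.ofReal |y - f t| ≤ ENNReal.ofReal (c/2 + ε) := by
            apply ENNReal.ofReal_le_ofReal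
            rw [abs_sub_comm] at ht
            exact ht.le
        _ = ENNReal.ofReal (c/2) + ENNReal.ofReal ε :=
            ENNReal.ofReal_add (by positivity) hε'.le
        _ = distortion R / 2 + ε := by
            rw [ENNReal.ofReal_div_of_pos (by norm_num), ENNReal.ofReal_toReal hlt.ne,
              ENNReal.ofReal_ofNat, ENNReal.ofReal_coe_nnreal]
    have hDle : D ≤ distortion R / 2 := by
      rw [hD]
      apply EMetric.hausdorffEdist_le_of_infEdist
      · intro x hx
        rw [EMetric.infEdist_zero_of_mem (Set.mem_univ x)]
        exact zero_le
      · intro y _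
        exact hnet y
    calc D * 2 ≤ distortion R / 2 * 2 := by
          exact mul_le_mul_left hDle 2
      _ = distortion R := ENNReal.div_mul_cancel two_ne_zero ENNReal.ofNat_ne_top

end
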